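/- Fix n ≥ 1 and nondecreasing sequences of reals p_1 ≤ … ≤ p_n and q_1 ≤ … ≤ q_n, and set m_i := (p_i + q_i)/2. Then: (i) m is nondecreasing (so the sorted midpoints give the one-dimensional Wasserstein mean of the two empirical measures); (ii) the geodesic midpoint identity holds: 2·W²₁(p,m) + 2·W²₁(m,q) = W²₁(p,q), where W²₁(a,b) := (1/n) · min_{ρ} Σ_{i=1}^n (a_i − b_{ρ(i)})² is the squared 1D Wasserstein distance between the uniform empirical measures on a and b, the minimum taken over all permutations ρ of {1,…,n}. -/

import Mathlib

/-- Squared one-dimensional 2-Wasserstein distance between the uniform empirical measures of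
`a` and `b`: `(1/n) · min_ρ Σ_i (a_i − b_{ρ(i)})²`. -/
noncomputable def W1sq {n : ℕ} (a b : Fin n → ℝ) : ℝ :=
  (n : ℝ)⁻¹ * ⨅ ρ : Equiv.Perm (Fin n), ∑ i, (a i - b (ρ i)) ^ 2

lemma W1sq_inf_eq {n : ℕ} (a b : Fin n → ℝ) (ha : Monotone a) (hb : Monotone b) :
    (⨅ ρ : Equiv.Perm (Fin n), ∑ i, (a i - b (ρ i)) ^ 2) = ∑ i, (a i - b i) ^ 2 := by
  refine le_antisymm ?_ (le_ciInf fun ρ => ?_)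
  · exact ciInf_le (Set.Finite.bddBelow (Set.finite_range _)) (1 : Equiv.Perm (Fin n))
  · have h0 := (ha.monovary hb).sum_comp_perm_mul_le_sum_mul (σ := ρ⁻¹)
    have h : ∑ i, a i * b (ρ i) ≤ ∑ i, a i * b i := by
      have := Equiv.sum_comp ρ (fun j => a (ρ⁻¹ j) * b j)
      simp only [Equiv.Perm.coe_inv, Equiv.symm_apply_apply] at this
      rw [this]; exact h0
    have hb2 : ∑ i, b (ρ i) ^ 2 = ∑ i, b i ^ 2 := Equiv.sum_comp ρ (fun i => b i ^ 2)
    have e1 : ∑ i, (a i - b i) ^ 2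
        = ∑ i, a i ^ 2 + ∑ i, b i ^ 2 - 2 * ∑ i, a i * b i := by
      rw [← Finset.sum_add_distrib, Finset.mul_sum, ← Finset.sum_sub_distrib]
      apply Finset.sum_congr rfl; intro i _; ring
    have e2 : ∑ i, (a i - b (ρ i)) ^ 2
        = ∑ i, a i ^ 2 + ∑ i, b i ^ 2 - 2 * ∑ i, a i * b (ρ i) := by
      rw [← hb2, ← Finset.sum_add_distrib, Finset.mul_sum, ← Finset.sum_sub_distrib]
      apply Finset.sum_congr rfl; intro i _; ring
    rw [e1, e2]
    nlinarith [h]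

lemma W1sq_eq {n : ℕ} (a b : Fin n → ℝ) (ha : Monotone a) (hb : Monotone b) :
    W1sq a b = (n : ℝ)⁻¹ * ∑ i, (a i - b i) ^ 2 := by
  rw [W1sq, W1sq_inf_eq a b ha hb]

/-- The sorted midpoints of two nondecreasing sequences form a nondecreasing sequence (the 1D
Wasserstein mean), and the geodesic midpoint identity
`2 W²(p,m) + 2 W²(m,q) = W²(p,q)` holds. -/
theorem wasserstein_mean_midpoint {n : ℕ} (hn : 1 ≤ n) (p q : Fin n → ℝ)
    (hp : Monotone p) (hq : Monotone q) :
    Monotone (fun i => (p i + q i) / 2) ∧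
    2 * W1sq p (fun i => (p i + q i) / 2) + 2 * W1sq (fun i => (p i + q i) / 2) q
      = W1sq p q := by
  have hm : Monotone (fun i => (p i + q i) / 2) := fun i j hij => by
    have := hp hij; have := hq hij
    simp only; linarith
  refine ⟨hm, ?_⟩
  rw [W1sq_eq p _ hp hm, W1sq_eq _ q hm hq, W1sq_eq p q hp hq]
  have e : ∀ i : Fin n, (p i - (p i + q i) / 2) ^ 2 = (p i - q i) ^ 2 / 4 := by
    intro i; ring
  have e' : ∀ i : Fin n, ((p i + q i) / 2 - q i) ^ 2 = (p i - q i) ^ 2 / 4 := by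
    intro i; ring
  simp only [e, e']
  rw [← Finset.sum_div]
  ring
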